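/- In the random network 𝒢_n, for any two disjoint subsets B, C ⊂ [n] and any d > 0, the expected number of ordered pairs (i,j) ∈ B × C with shortest-path distance D(i,j) ≤ d is at most #B · #C · e^d / (n−1). -/

import Mathlib

open MeasureTheory ProbabilityTheory Filter Real Set
open scoped ENNReal Classical

noncomputable section

namespace EdgeFlows

/-- A configuration of edge lengths on the complete graph with vertex set `Fin n`. -/
abbrev Config (n : ℕ) := Fin n → Fin n → ℝ

/-- The length of a list of vertices viewed as a walk, for an edge-weight function `w`. -/
def listLen {V : Type*} (w : V → V → ℝ) (p : List V) : ℝ :=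
  ((p.zip p.tail).map fun q => w q.1 q.2).sum

/-- `p` is a (self-avoiding) path from `i` to `j`. -/
def IsPath {V : Type*} (p : List V) (i j : V) : Prop :=
  p.Nodup ∧ p.head? = some i ∧ p.getLast? = some j

/-- The shortest-path distance `D(i,j)` in the network with edge lengths `ℓ`. -/
def netDist {n : ℕ} (ℓ : Config n) (i j : Fin n) : ℝ :=
  sInf {x | ∃ p : List (Fin n), IsPath p i j ∧ listLen ℓ p = x}

/-- The directed edge `(a,b)` lies on a shortest path from `i` to `j`
(with probability one the shortest path is unique, so this says that the shortest
path `π(i,j)` traverses `(a,b)` in this direction). -/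
def OnShortestPath {n : ℕ} (ℓ : Config n) (i j a b : Fin n) : Prop :=
  ∃ p : List (Fin n), IsPath p i j ∧ listLen ℓ p = netDist ℓ i j ∧
    (a, b) ∈ p.zip p.tail

/-- The flow `F_n(e)` across the directed edge `e = (a,b)`: a flow of volume `1/n` is routed
along the shortest path between every ordered pair of distinct vertices. -/
def flow (n : ℕ) (ℓ : Config n) (a b : Fin n) : ℝ :=
  ((Finset.univ.filter fun ij : Fin n × Fin n =>
      ij.1 ≠ ij.2 ∧ OnShortestPath ℓ ij.1 ij.2 a b).card : ℝ) / n

/-- `μ` is the law of the random network `𝒢_n`: the edge lengths `L_{ij} = L_{ji}`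
are independent Exponential(rate `1/n`) random variables. -/
def IsEdgeLaw (n : ℕ) (μ : Measure (Config n)) : Prop :=
  IsProbabilityMeasure μ ∧
  (∀ᵐ ℓ ∂μ, ∀ i j, ℓ i j = ℓ j i) ∧
  iIndepFun
    (fun (e : {p : Fin n × Fin n // p.1 < p.2}) (ℓ : Config n) => ℓ e.1.1 e.1.2) μ ∧
  (∀ e : {p : Fin n × Fin n // p.1 < p.2},
    μ.map (fun ℓ : Config n => ℓ e.1.1 e.1.2) = expMeasure (1 / n))

/-- `G(z) = ∫₀^∞ P(W₁ W₂ e^{-u} > z) du` where `W₁, W₂` are independent Exponential(1). -/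
def Gfun (z : ℝ) : ℝ :=
  ∫ u in Set.Ioi (0:ℝ),
    (((expMeasure 1).prod (expMeasure 1)) {w : ℝ × ℝ | z < w.1 * w.2 * Real.exp (-u)}).toReal

-- ===== auxiliary =====

abbrev Edge (n : ℕ) := {p : Fin n × Fin n // p.1 < p.2}

variable {n : ℕ}

lemma measurable_eval (a b : Fin n) : Measurable fun ℓ : Config n => ℓ a b :=
  (measurable_pi_apply b).comp (measurable_pi_apply a)

lemma measurable_sum_eval (s : Finset (Edge n)) :
    Measurable fun ℓ : Config n => ∑ e ∈ s, ℓ e.1.1 e.1.2 :=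
  Finset.measurable_sum s fun e _ => measurable_eval _ _

/-- Core tail bound for sums of independent exponentials. -/
lemma measure_sum_le (μ : Measure (Config n)) (hμ : IsEdgeLaw n μ)
    (s : Finset (Edge n)) (d : ℝ) :
    μ {ℓ : Config n | ∑ e ∈ s, ℓ e.1.1 e.1.2 ≤ d}
      ≤ if 0 ≤ d then ENNReal.ofReal ((d / n) ^ s.card / (Nat.factorial s.card)) else 0 := by
  haveI : IsProbabilityMeasure μ := hμ.1
  induction s using Finset.induction_on generalizing d with
  | empty =>
    by_cases hd : 0 ≤ d
    · simp only [Finset.sum_empty, Finset.card_empty, pow_zero, Nat.factorial_zero, if_pos hd]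
      have : {ℓ : Config n | (0:ℝ) ≤ d} = Set.univ := by ext ℓ; simp [hd]
      rw [this]
      simp
    · simp only [Finset.sum_empty, if_neg hd]
      have : {ℓ : Config n | (0:ℝ) ≤ d} = (∅ : Set (Config n)) := by ext ℓ; simp [hd]
      simp [this]
  | @insert e s he ih =>
    have hn0 : 0 < (n:ℝ) := by exact_mod_cast e.1.2.pos
    have hr0 : 0 < (1:ℝ) / n := by positivity
    have hmeas : ∀ a : Edge n, Measurable fun ℓ : Config n => ℓ a.1.1 a.1.2 :=
      fun a => measurable_eval _ _
    have hT : Measurable fun ℓ : Config n => ∑ j ∈ s, ℓ j.1.1 j.1.2 := measurable_sum_eval s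
    have hindall : iIndepFun
        (fun (a : Edge n) (ℓ : Config n) => ℓ a.1.1 a.1.2) μ := hμ.2.2.1
    have hind : IndepFun (fun ℓ : Config n => ∑ j ∈ s, ℓ j.1.1 j.1.2)
        (fun ℓ : Config n => ℓ e.1.1 e.1.2) μ := by
      have h := hindall.indepFun_finsetSum_of_notMem hmeas he
      have hfun : (∑ j ∈ s, fun ℓ : Config n => ℓ j.1.1 j.1.2)
          = fun ℓ : Config n => ∑ j ∈ s, ℓ j.1.1 j.1.2 := by
        funext ℓ; simp [Finset.sum_apply]
      rwa [hfun] at h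
    have hpair : μ.map (fun ℓ : Config n => (ℓ e.1.1 e.1.2, ∑ j ∈ s, ℓ j.1.1 j.1.2))
        = (expMeasure (1 / n)).prod (μ.map (fun ℓ : Config n => ∑ j ∈ s, ℓ j.1.1 j.1.2)) := by
      rw [← hμ.2.2.2 e]
      exact (indepFun_iff_map_prod_eq_prod_map_map (hmeas e).aemeasurable
        hT.aemeasurable).mp hind.symm
    have hmA : MeasurableSet {p : ℝ × ℝ | p.1 + p.2 ≤ d} :=
      measurableSet_le (measurable_fst.add measurable_snd) measurable_const
    have hset : {ℓ : Config n | ∑ a ∈ insert e s, ℓ a.1.1 a.1.2 ≤ d}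
        = (fun ℓ : Config n => (ℓ e.1.1 e.1.2, ∑ j ∈ s, ℓ j.1.1 j.1.2)) ⁻¹'
            {p : ℝ × ℝ | p.1 + p.2 ≤ d} := by
      ext ℓ; simp [Finset.sum_insert he]
    rw [hset, ← Measure.map_apply ((hmeas e).prodMk hT) hmA, hpair, Measure.prod_apply hmA]
    set k := s.card with hk
    have hTmap : ∀ x : ℝ,
        (μ.map (fun ℓ : Config n => ∑ j ∈ s, ℓ j.1.1 j.1.2)) (Prod.mk x ⁻¹' {p : ℝ × ℝ | p.1 + p.2 ≤ d})
          = μ {ℓ : Config n | ∑ j ∈ s, ℓ j.1.1 j.1.2 ≤ d - x} := by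
      intro x
      have hpre : Prod.mk x ⁻¹' {p : ℝ × ℝ | p.1 + p.2 ≤ d} = Set.Iic (d - x) := by
        ext t; simp only [Set.mem_preimage, Set.mem_setOf_eq, Set.mem_Iic]
        constructor <;> intro h <;> linarith
      rw [hpre, Measure.map_apply hT measurableSet_Iic]
      rfl
    have hstep1 : ∫⁻ x, (μ.map (fun ℓ : Config n => ∑ j ∈ s, ℓ j.1.1 j.1.2))
          (Prod.mk x ⁻¹' {p : ℝ × ℝ | p.1 + p.2 ≤ d}) ∂(expMeasure (1/n))
        ≤ ∫⁻ x, (if 0 ≤ d - x then ENNReal.ofReal (((d - x) / n) ^ k / (Nat.factorial k)) else 0)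
            ∂(expMeasure (1/n)) := by
      refine lintegral_mono fun x => ?_
      rw [hTmap x]
      exact ih (d - x)
    refine hstep1.trans ?_
    have hexp : expMeasure ((1:ℝ)/n) = volume.withDensity (exponentialPDF (1/n)) := rfl
    have hgmeas : Measurable fun x : ℝ =>
        (if 0 ≤ d - x then ENNReal.ofReal (((d - x) / n) ^ k / (Nat.factorial k)) else 0 : ℝ≥0∞) := by
      apply Measurable.ite
      · exact measurableSet_le measurable_const (measurable_const.sub measurable_id)
      · exact (((measurable_const.sub measurable_id).div_const _).pow_const _ |>.div_const
          _).ennreal_ofReal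
      · exact measurable_const
    have hpdfmeas : Measurable (exponentialPDF ((1:ℝ)/n)) :=
      (measurable_exponentialPDFReal _).ennreal_ofReal
    rw [hexp, lintegral_withDensity_eq_lintegral_mul _ hpdfmeas hgmeas]
    have hbound : ∀ x : ℝ,
        (exponentialPDF (1/n) * fun x => (if 0 ≤ d - x then
            ENNReal.ofReal (((d - x) / n) ^ k / (Nat.factorial k)) else 0)) x
        ≤ (Set.Icc 0 d).indicator
            (fun x => ENNReal.ofReal ((1/n) * (((d - x) / n) ^ k / (Nat.factorial k)))) x := by
      intro x
      simp only [Pi.mul_apply]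
      by_cases hx0 : 0 ≤ x
      · by_cases hxd : x ≤ d
        · have hdx : 0 ≤ d - x := by linarith
          rw [if_pos hdx, Set.indicator_of_mem (Set.mem_Icc.mpr ⟨hx0, hxd⟩),
            exponentialPDF_of_nonneg hx0, ← ENNReal.ofReal_mul (by positivity)]
          apply ENNReal.ofReal_le_ofReal
          have h1 : (1:ℝ)/n * rexp (-(1/n * x)) ≤ 1/n := by
            have : rexp (-(1/n * x)) ≤ 1 := by
              rw [Real.exp_le_one_iff]
              nlinarith
            nlinarith
          have h2 : (0:ℝ) ≤ ((d - x) / n) ^ k / (Nat.factorial k) := by positivity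
          exact mul_le_mul_of_nonneg_right h1 h2
        · rw [if_neg (by intro h; exact hxd (by linarith)), mul_zero]
          exact bot_le
      · rw [exponentialPDF_of_neg (lt_of_not_ge hx0), zero_mul]
        exact bot_le
    refine (lintegral_mono hbound).trans ?_
    rw [lintegral_indicator measurableSet_Icc]
    by_cases hd : 0 ≤ d
    swap
    · rw [Set.Icc_eq_empty (by intro h; exact hd (le_trans (le_refl 0) h)), Measure.restrict_empty,
        lintegral_zero_measure]
      rw [if_neg hd]
    rw [if_pos hd]
    have hn0' : (n:ℝ) ≠ 0 := ne_of_gt hn0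
    have hkfac : ((Nat.factorial k : ℕ) : ℝ) ≠ 0 := Nat.cast_ne_zero.mpr (Nat.factorial_ne_zero k)
    have hfun : ∀ x : ℝ, (1:ℝ)/n * (((d - x) / n) ^ k / (Nat.factorial k))
        = ((1:ℝ) / (n ^ (k+1) * (Nat.factorial k))) * (d - x) ^ k := by
      intro x
      rw [div_pow]
      ring
    have hInt : IntegrableOn
        (fun x : ℝ => (1:ℝ)/n * (((d - x) / n) ^ k / (Nat.factorial k))) (Set.Icc 0 d) volume := by
      apply Continuous.integrableOn_Icc
      fun_prop
    have hnnae : 0 ≤ᵐ[volume.restrict (Set.Icc 0 d)]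
        fun x : ℝ => (1:ℝ)/n * (((d - x) / n) ^ k / (Nat.factorial k)) := by
      refine (ae_restrict_iff' measurableSet_Icc).mpr (ae_of_all _ fun x hx => ?_)
      have : 0 ≤ d - x := by linarith [(Set.mem_Icc.mp hx).2]
      positivity
    rw [← ofReal_integral_eq_lintegral_ofReal hInt hnnae]
    apply ENNReal.ofReal_le_ofReal
    have hval : ∫ x in Set.Icc 0 d, (1:ℝ)/n * (((d - x) / n) ^ k / (Nat.factorial k))
        = ((1:ℝ) / (n ^ (k+1) * (Nat.factorial k))) * (d ^ (k+1) / (k+1)) := by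
      simp only [hfun]
      rw [integral_const_mul]
      congr 1
      rw [MeasureTheory.integral_Icc_eq_integral_Ioc, ← intervalIntegral.integral_of_le hd]
      have := intervalIntegral.integral_comp_sub_left (a := (0:ℝ)) (b := d) (fun x => x ^ k) d
      rw [this]
      simp only [sub_self, sub_zero]
      rw [integral_pow]
      simp [zero_pow (Nat.succ_ne_zero k)]
    rw [hval, Finset.card_insert_of_notMem he, ← hk]
    apply le_of_eq
    have hkk : ((k:ℝ)+1) ≠ 0 := by positivity
    rw [div_pow, Nat.factorial_succ]
    push_cast
    field_simp
    try tauto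


-- ===== path combinatorics =====

def sortPair (q : Fin n × Fin n) : Fin n × Fin n := if q.1 < q.2 then q else q.swap

lemma sortPair_lt {q : Fin n × Fin n} (h : q.1 ≠ q.2) : (sortPair q).1 < (sortPair q).2 := by
  unfold sortPair
  split_ifs with h1
  · exact h1
  · exact lt_of_le_of_ne (not_lt.mp h1) (Ne.symm h)

lemma sortPair_symval (ℓ : Config n) (hsym : ∀ a b, ℓ a b = ℓ b a) (q : Fin n × Fin n) :
    ℓ (sortPair q).1 (sortPair q).2 = ℓ q.1 q.2 := by
  unfold sortPair
  split_ifs with h1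
  · rfl
  · exact hsym _ _

lemma sortPair_eq {q q' : Fin n × Fin n} (h : sortPair q = sortPair q') :
    q = q' ∨ q = q'.swap := by
  unfold sortPair at h
  split_ifs at h with h1 h2 h2
  · exact Or.inl h
  · exact Or.inr h
  · right; rw [← h, Prod.swap_swap]
  · left; exact Prod.swap_injective h

lemma zip_tail_forall : ∀ (p : List (Fin n)), p.Nodup → ∀ q ∈ p.zip p.tail, q.1 ≠ q.2
  | [], _, q, hq => by simp at hq
  | [a], _, q, hq => by simp at hq
  | a :: b :: t, h, q, hq => by
      simp only [List.tail_cons, List.zip_cons_cons, List.mem_cons] at hq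
      rcases hq with rfl | hq
      · intro hab
        exact (List.nodup_cons.mp h).1 (by simp_all)
      · exact zip_tail_forall (b :: t) (List.nodup_cons.mp h).2 q hq

lemma edges_nodup : ∀ (p : List (Fin n)), p.Nodup → ((p.zip p.tail).map sortPair).Nodup
  | [], _ => by simp
  | [a], _ => by simp
  | a :: b :: t, h => by
      simp only [List.tail_cons, List.zip_cons_cons, List.map_cons, List.nodup_cons]
      obtain ⟨ha, h2⟩ := List.nodup_cons.mp h
      refine ⟨?_, edges_nodup (b :: t) h2⟩
      intro hmem
      rw [List.mem_map] at hmem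
      obtain ⟨⟨q1, q2⟩, hq, heq⟩ := hmem
      have hq12 : q1 ≠ q2 := zip_tail_forall (b :: t) h2 _ hq
      have hmemz := List.of_mem_zip hq
      have : a ∈ b :: t := by
        rcases sortPair_eq heq with h' | h'
        · rw [Prod.mk.injEq] at h'
          exact h'.1 ▸ hmemz.1
        · rw [Prod.swap_prod_mk, Prod.mk.injEq] at h'
          exact h'.2 ▸ List.mem_cons_of_mem _ hmemz.2
      exact ha this

lemma listLen_eq_sum (ℓ : Config n) (hsym : ∀ a b, ℓ a b = ℓ b a)
    (p : List (Fin n)) (hp : p.Nodup) :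
    listLen ℓ p = ∑ q ∈ ((p.zip p.tail).map sortPair).toFinset, ℓ q.1 q.2 := by
  rw [List.sum_toFinset _ (edges_nodup p hp), List.map_map]
  unfold listLen
  congr 1
  have : ((fun q : Fin n × Fin n => ℓ q.1 q.2) ∘ sortPair)
      = fun q : Fin n × Fin n => ℓ q.1 q.2 := by
    funext q; exact sortPair_symval ℓ hsym q
  rw [this]

lemma edges_card (p : List (Fin n)) (hp : p.Nodup) :
    ((p.zip p.tail).map sortPair).toFinset.card = p.length - 1 := by
  rw [List.toFinset_card_of_nodup (edges_nodup p hp), List.length_map, List.length_zip,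
    List.length_tail]
  exact min_eq_right (Nat.sub_le _ _)

lemma finite_paths (i j : Fin n) : {p : List (Fin n) | IsPath p i j}.Finite := by
  apply (List.finite_length_le (Fin n) n).subset
  intro p hp
  have := hp.1.length_le_card
  simpa using this

lemma measurable_listLenSet (p : List (Fin n)) (d : ℝ) :
    MeasurableSet {ℓ : Config n | listLen ℓ p ≤ d} := by
  have hm : Measurable fun ℓ : Config n => listLen ℓ p := by
    unfold listLen
    generalize (p.zip p.tail) = L
    induction L with
    | nil => simpa using measurable_const
    | cons q L ih =>
      simp only [List.map_cons, List.sum_cons]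
      exact (measurable_eval q.1 q.2).add ih
  exact measurableSet_le hm measurable_const

lemma event_eq (ℓ : Config n) {i j : Fin n} (hij : i ≠ j) (d : ℝ) :
    netDist ℓ i j ≤ d ↔ ∃ p, IsPath p i j ∧ listLen ℓ p ≤ d := by
  set S := {x | ∃ p : List (Fin n), IsPath p i j ∧ listLen ℓ p = x} with hS
  have hSfin : S.Finite := by
    apply ((finite_paths i j).image (listLen ℓ)).subset
    rintro x ⟨p, hp, he⟩
    exact ⟨p, hp, he⟩
  have hpath0 : IsPath [i, j] i j := by
    refine ⟨by simp [hij], rfl, rfl⟩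
  have hne : S.Nonempty := ⟨_, ⟨_, hpath0, rfl⟩⟩
  have hnd : netDist ℓ i j = sInf S := rfl
  rw [hnd]
  constructor
  · intro h
    obtain ⟨p, hp, heq⟩ := hne.csInf_mem hSfin
    exact ⟨p, hp, heq.symm ▸ h⟩
  · rintro ⟨p, hp, hle⟩
    exact le_trans (csInf_le hSfin.bddBelow ⟨p, hp, rfl⟩) hle

lemma two_le_length {p : List (Fin n)} {i j : Fin n} (hp : IsPath p i j) (hij : i ≠ j) :
    2 ≤ p.length := by
  match p, hp with
  | [], ⟨_, h1, _⟩ => simp at h1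
  | [a], ⟨_, h1, h2⟩ =>
    simp only [List.head?_cons, Option.some.injEq] at h1
    simp only [List.getLast?_singleton, Option.some.injEq] at h2
    exact absurd (h1.symm.trans h2) hij
  | a :: b :: t, _ => simp

lemma reconstruct {p : List (Fin n)} {i j : Fin n} (hp : IsPath p i j) (hij : i ≠ j) :
    p = i :: (p.tail.dropLast ++ [j]) := by
  match p, hp with
  | [], ⟨_, h1, _⟩ => simp at h1
  | [a], ⟨_, h1, h2⟩ =>
    simp only [List.head?_cons, Option.some.injEq] at h1
    simp only [List.getLast?_singleton, Option.some.injEq] at h2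
    exact absurd (h1.symm.trans h2) hij
  | a :: b :: t, ⟨_, h1, h2⟩ =>
    simp only [List.head?_cons, Option.some.injEq] at h1
    have hne : (b :: t) ≠ [] := by simp
    have hlast : (b :: t).getLast hne = j := by
      have h4 := List.getLast?_eq_getLast (l := a :: b :: t) (by simp)
      rw [h4, Option.some.injEq] at h2
      rw [← h2]
      exact (List.getLast_cons hne).symm
    rw [List.tail_cons, ← h1, ← hlast]
    exact congrArg (List.cons a) (List.dropLast_append_getLast hne).symm

lemma card_paths_le (i j : Fin n) (hij : i ≠ j) (k : ℕ) :
    (((finite_paths i j).toFinset.filter fun p => p.length - 1 = k).card) ≤ n ^ (k - 1) := by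
  classical
  set s := (finite_paths i j).toFinset.filter fun p => p.length - 1 = k with hsdef
  have hlen : ∀ p ∈ s, p.tail.dropLast.length = k - 1 := by
    intro p hp
    rw [hsdef, Finset.mem_filter, Set.Finite.mem_toFinset] at hp
    have h2 := two_le_length hp.1 hij
    rw [List.length_dropLast, List.length_tail]
    omega
  let f : List (Fin n) → List.Vector (Fin n) (k - 1) := fun p =>
    if h : p.tail.dropLast.length = k - 1 then ⟨p.tail.dropLast, h⟩
    else ⟨List.replicate (k-1) i, by simp⟩
  refine le_trans (Finset.card_le_card_of_injOn f (fun p _ => Finset.mem_univ (f p)) ?_)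
    (le_of_eq (by rw [Finset.card_univ, card_vector, Fintype.card_fin]))
  · intro p hp p' hp' hf
    rw [Finset.mem_coe] at hp hp'
    have h1 := hlen p hp
    have h2 := hlen p' hp'
    simp only [f, dif_pos h1, dif_pos h2] at hf
    have hmid : p.tail.dropLast = p'.tail.dropLast := by simpa [h1, h2] using congrArg Subtype.val hf
    rw [hsdef, Finset.mem_filter, Set.Finite.mem_toFinset] at hp hp'
    rw [reconstruct hp.1 hij, reconstruct hp'.1 hij, hmid]

lemma path_sum_le (hn : 2 ≤ n) (i j : Fin n) (hij : i ≠ j) {d : ℝ} (hd : 0 ≤ d) :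
    ∑ p ∈ (finite_paths i j).toFinset,
        ((d / n) ^ (p.length - 1) / (Nat.factorial (p.length - 1)))
      ≤ Real.exp d / ((n : ℝ) - 1) := by
  have hn0 : 0 < (n:ℝ) := by
    have : 0 < n := by omega
    exact_mod_cast this
  have hmaps : ∀ p ∈ (finite_paths i j).toFinset, p.length - 1 ∈ Finset.Icc 1 n := by
    intro p hp
    rw [Set.Finite.mem_toFinset] at hp
    have h2 := two_le_length hp hij
    have hle : p.length ≤ n := by
      have := hp.1.length_le_card
      simpa using this
    simp only [Finset.mem_Icc]
    omega
  rw [← Finset.sum_fiberwise_of_maps_to hmaps]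
  have hstep : ∀ kk ∈ Finset.Icc 1 n,
      (∑ p ∈ (finite_paths i j).toFinset.filter fun p => p.length - 1 = kk,
        ((d / n) ^ (p.length - 1) / (Nat.factorial (p.length - 1))))
      ≤ (n:ℝ) ^ (kk - 1) * ((d / n) ^ kk / (Nat.factorial kk)) := by
    intro kk _
    have hcongr : ∀ p ∈ (finite_paths i j).toFinset.filter fun p => p.length - 1 = kk,
        ((d / (n:ℝ)) ^ (p.length - 1) / (Nat.factorial (p.length - 1)))
          = (d / n) ^ kk / (Nat.factorial kk) := by
      intro p hp
      rw [(Finset.mem_filter.mp hp).2]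
    rw [Finset.sum_congr rfl hcongr, Finset.sum_const, nsmul_eq_mul]
    apply mul_le_mul_of_nonneg_right
    · exact_mod_cast card_paths_le i j hij kk
    · positivity
  refine (Finset.sum_le_sum hstep).trans ?_
  have heq : ∀ kk ∈ Finset.Icc 1 n, (n:ℝ) ^ (kk - 1) * ((d / n) ^ kk / (Nat.factorial kk))
      = (1 / n) * (d ^ kk / (Nat.factorial kk)) := by
    intro kk hkk
    rw [Finset.mem_Icc] at hkk
    have h1 : (n:ℝ) ^ kk = (n:ℝ) ^ (kk - 1) * n := by
      rw [← pow_succ]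
      congr 1
      omega
    have hfac : ((Nat.factorial kk : ℕ):ℝ) ≠ 0 := Nat.cast_ne_zero.mpr (Nat.factorial_ne_zero _)
    rw [div_pow, h1]
    field_simp
  rw [Finset.sum_congr rfl heq, ← Finset.mul_sum]
  have hins : insert 0 (Finset.Icc 1 n) = Finset.range (n+1) := by
    ext x
    simp only [Finset.mem_insert, Finset.mem_Icc, Finset.mem_range, Nat.lt_succ_iff]
    omega
  have hsum : (∑ kk ∈ Finset.Icc 1 n, d ^ kk / (Nat.factorial kk)) ≤ Real.exp d - 1 := by
    have h0 : (0:ℕ) ∉ Finset.Icc 1 n := by simp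
    have hh := Real.sum_le_exp_of_nonneg hd (n+1)
    rw [← hins, Finset.sum_insert h0] at hh
    simp only [pow_zero, Nat.factorial_zero, Nat.cast_one, div_one] at hh
    linarith
  have hn1 : (0:ℝ) < (n:ℝ) - 1 := by
    have : (2:ℝ) ≤ (n:ℝ) := by exact_mod_cast hn
    linarith
  have hlast : (1/(n:ℝ)) * (Real.exp d - 1) ≤ Real.exp d / ((n:ℝ) - 1) := by
    rw [one_div, inv_mul_eq_div, div_le_div_iff₀ hn0 hn1]
    have := Real.exp_pos d
    nlinarith
  exact le_trans (mul_le_mul_of_nonneg_left hsum (by positivity)) hlast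

lemma pair_bound (μ : Measure (Config n)) (hμ : IsEdgeLaw n μ) (hn : 2 ≤ n)
    {i j : Fin n} (hij : i ≠ j) {d : ℝ} (hd : 0 ≤ d) :
    μ {ℓ : Config n | netDist ℓ i j ≤ d} ≤ ENNReal.ofReal (Real.exp d / ((n:ℝ) - 1)) := by
  haveI : IsProbabilityMeasure μ := hμ.1
  set P := (finite_paths i j).toFinset with hP
  have hEv : {ℓ : Config n | netDist ℓ i j ≤ d} = ⋃ p ∈ P, {ℓ : Config n | listLen ℓ p ≤ d} := by
    ext ℓ
    simp only [Set.mem_setOf_eq, Set.mem_iUnion, hP, Set.Finite.mem_toFinset]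
    rw [event_eq ℓ hij d]
    constructor
    · rintro ⟨p, hp, hle⟩
      exact ⟨p, hp, hle⟩
    · rintro ⟨p, hp, hle⟩
      exact ⟨p, hp, hle⟩
  rw [hEv]
  refine (measure_biUnion_finset_le P _).trans ?_
  have hterm : ∀ p ∈ P, μ {ℓ : Config n | listLen ℓ p ≤ d}
      ≤ ENNReal.ofReal ((d / n) ^ (p.length - 1) / (Nat.factorial (p.length - 1))) := by
    intro p hp
    rw [hP, Set.Finite.mem_toFinset] at hp
    set s := ((p.zip p.tail).map sortPair).toFinset with hs
    have hall : ∀ q ∈ s, q.1 < q.2 := by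
      intro q hq
      rw [hs, List.mem_toFinset, List.mem_map] at hq
      obtain ⟨q', hq', rfl⟩ := hq
      exact sortPair_lt (zip_tail_forall p hp.1 q' hq')
    set s' : Finset (Edge n) := s.subtype fun q => q.1 < q.2 with hs'
    have hcard : s'.card = p.length - 1 := by
      rw [hs', Finset.card_subtype, Finset.filter_true_of_mem hall, hs]
      exact edges_card p hp.1
    have hsub : {ℓ : Config n | listLen ℓ p ≤ d} ≤ᵐ[μ]
        {ℓ : Config n | ∑ e ∈ s', ℓ e.1.1 e.1.2 ≤ d} := by
      filter_upwards [hμ.2.1] with ℓ hsym hle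
      have h1 : ∑ e ∈ s', ℓ e.1.1 e.1.2 = ∑ q ∈ s, ℓ q.1 q.2 := by
        rw [hs']
        exact Finset.sum_subtype_of_mem (fun q => ℓ q.1 q.2) hall
      have hle' : listLen ℓ p ≤ d := hle
      show (∑ e ∈ s', ℓ e.1.1 e.1.2) ≤ d
      rw [h1, ← listLen_eq_sum ℓ hsym p hp.1]
      exact hle' 
    refine (measure_mono_ae hsub).trans ?_
    have hms := measure_sum_le μ hμ s' d
    rw [if_pos hd, hcard] at hms
    exact hms
  calc ∑ p ∈ P, μ {ℓ : Config n | listLen ℓ p ≤ d}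
      ≤ ∑ p ∈ P, ENNReal.ofReal ((d / n) ^ (p.length - 1) / (Nat.factorial (p.length - 1))) :=
        Finset.sum_le_sum hterm
    _ = ENNReal.ofReal (∑ p ∈ P,
          ((d / (n:ℝ)) ^ (p.length - 1) / (Nat.factorial (p.length - 1)))) :=
        (ENNReal.ofReal_sum_of_nonneg (fun p _ => by positivity)).symm
    _ ≤ ENNReal.ofReal (Real.exp d / ((n:ℝ) - 1)) :=
        ENNReal.ofReal_le_ofReal (path_sum_le hn i j hij hd)

/-- **Lemma (LBCD).**  For disjoint `B, C ⊆ [n]` and `d > 0`, the expected number of ordered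
pairs `(i,j) ∈ B × C` with `D(i,j) ≤ d` is at most `#B #C e^d / (n-1)`. -/
theorem expected_close_pairs_le (n : ℕ)
    (μ : Measure (Config n)) (hμ : IsEdgeLaw n μ)
    (B C : Finset (Fin n)) (hBC : Disjoint B C) (d : ℝ) (hd : 0 < d) :
    ∫ ℓ, (((B ×ˢ C).filter fun ij : Fin n × Fin n => netDist ℓ ij.1 ij.2 ≤ d).card : ℝ) ∂μ
      ≤ (B.card : ℝ) * C.card * Real.exp d / ((n : ℝ) - 1) := by
  haveI : IsProbabilityMeasure μ := hμ.1
  rcases Finset.eq_empty_or_nonempty B with rfl | hB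
  · simp
  rcases Finset.eq_empty_or_nonempty C with rfl | hC
  · simp
  obtain ⟨b, hb⟩ := hB
  obtain ⟨c, hc⟩ := hC
  have hbc : b ≠ c := by
    intro h
    exact Finset.disjoint_left.mp hBC hb (h ▸ hc)
  have hn : 2 ≤ n := by
    have h1 : (b:ℕ) ≠ (c:ℕ) := fun h => hbc (Fin.ext h)
    have h2 := b.isLt
    have h3 := c.isLt
    omega
  have hn1 : (0:ℝ) < (n:ℝ) - 1 := by
    have : (2:ℝ) ≤ (n:ℝ) := by exact_mod_cast hn
    linarith
  have hne : ∀ ij : Fin n × Fin n, ij ∈ B ×ˢ C → ij.1 ≠ ij.2 := by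
    intro ij hij
    rw [Finset.mem_product] at hij
    intro h
    exact Finset.disjoint_left.mp hBC hij.1 (h ▸ hij.2)
  have hEvMeas : ∀ ij : Fin n × Fin n, ij ∈ B ×ˢ C →
      MeasurableSet {ℓ : Config n | netDist ℓ ij.1 ij.2 ≤ d} := by
    intro ij hij
    have hEv : {ℓ : Config n | netDist ℓ ij.1 ij.2 ≤ d}
        = ⋃ p ∈ (finite_paths ij.1 ij.2).toFinset, {ℓ : Config n | listLen ℓ p ≤ d} := by
      ext ℓ
      simp only [Set.mem_setOf_eq, Set.mem_iUnion, Set.Finite.mem_toFinset]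
      rw [event_eq ℓ (hne ij hij) d]
      constructor
      · rintro ⟨p, hp, hle⟩
        exact ⟨p, hp, hle⟩
      · rintro ⟨p, hp, hle⟩
        exact ⟨p, hp, hle⟩
    rw [hEv]
    exact (finite_paths ij.1 ij.2).toFinset.measurableSet_biUnion
      (fun p _ => measurable_listLenSet p d)
  have hcardeq : ∀ ℓ : Config n,
      (((B ×ˢ C).filter fun ij : Fin n × Fin n => netDist ℓ ij.1 ij.2 ≤ d).card : ℝ)
      = ∑ ij ∈ B ×ˢ C,
          Set.indicator {ℓ' : Config n | netDist ℓ' ij.1 ij.2 ≤ d} (1 : Config n → ℝ) ℓ := by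
    intro ℓ
    rw [Finset.card_filter]
    push_cast
    refine Finset.sum_congr rfl fun ij _ => ?_
    rw [Set.indicator_apply]
    simp only [Set.mem_setOf_eq, Pi.one_apply]
  have hint : ∀ ij : Fin n × Fin n, ij ∈ B ×ˢ C →
      Integrable (Set.indicator {ℓ' : Config n | netDist ℓ' ij.1 ij.2 ≤ d}
        (1 : Config n → ℝ)) μ :=
    fun ij hij => (integrable_const 1).indicator (hEvMeas ij hij)
  calc ∫ ℓ, (((B ×ˢ C).filter fun ij : Fin n × Fin n => netDist ℓ ij.1 ij.2 ≤ d).card : ℝ) ∂μ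
      = ∫ ℓ, (∑ ij ∈ B ×ˢ C,
          Set.indicator {ℓ' : Config n | netDist ℓ' ij.1 ij.2 ≤ d} (1 : Config n → ℝ) ℓ) ∂μ :=
        integral_congr_ae (ae_of_all _ fun ℓ => hcardeq ℓ)
    _ = ∑ ij ∈ B ×ˢ C, ∫ ℓ, Set.indicator {ℓ' : Config n | netDist ℓ' ij.1 ij.2 ≤ d}
          (1 : Config n → ℝ) ℓ ∂μ := integral_finset_sum _ hint
    _ = ∑ ij ∈ B ×ˢ C, (μ {ℓ : Config n | netDist ℓ ij.1 ij.2 ≤ d}).toReal := by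
        refine Finset.sum_congr rfl fun ij hij => ?_
        exact integral_indicator_one (hEvMeas ij hij)
    _ ≤ ∑ _ij ∈ B ×ˢ C, Real.exp d / ((n:ℝ) - 1) := by
        refine Finset.sum_le_sum fun ij hij => ?_
        refine ENNReal.toReal_le_of_le_ofReal
          (div_nonneg (Real.exp_pos d).le hn1.le) ?_
        exact pair_bound μ hμ hn (hne ij hij) hd.le
    _ = (B.card : ℝ) * C.card * Real.exp d / ((n:ℝ) - 1) := by
        rw [Finset.sum_const, Finset.card_product, nsmul_eq_mul]
        push_cast
        ring

end EdgeFlows
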